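/- For all sufficiently large n, lcm(1,2,…,n) ≤ 3ⁿ. -/

import Mathlib

open Nat Finset

namespace Hanson

/-- remainder part -/
def r (n : ℕ) : ℕ := n - (n / 2 + n / 3 + n / 7 + n / 43)

lemma sum_div_le (n : ℕ) : n / 2 + n / 3 + n / 7 + n / 43 ≤ n := by omega

lemma sum_div_lt {n : ℕ} (hn : 1 ≤ n) : n / 2 + n / 3 + n / 7 + n / 43 + 1 ≤ n := by omega

lemma r_pos {n : ℕ} (hn : 1 ≤ n) : 1 ≤ r n := by
  have := sum_div_lt hn; unfold r; omega

lemma parts_sum (n : ℕ) : n / 2 + (n / 3 + (n / 7 + (n / 43 + r n))) = n := by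
  have := sum_div_le n; unfold r; omega

/-- the multinomial coefficient, as a chain of binomials -/
def B (n : ℕ) : ℕ :=
  Nat.choose n (n / 2) *
    (Nat.choose (n / 3 + (n / 7 + (n / 43 + r n))) (n / 3) *
      (Nat.choose (n / 7 + (n / 43 + r n)) (n / 7) *
        Nat.choose (n / 43 + r n) (n / 43)))

lemma B_pos (n : ℕ) : 0 < B n := by
  unfold B
  have h1 := parts_sum n
  refine Nat.mul_pos (Nat.choose_pos (by omega)) (Nat.mul_pos (Nat.choose_pos (by omega))
    (Nat.mul_pos (Nat.choose_pos (by omega)) (Nat.choose_pos (by omega))))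

lemma acff (a b : ℕ) : (a + b).choose a * a ! * b ! = (a + b)! := by
  rw [add_comm a b, mul_right_comm]
  exact Nat.add_choose_mul_factorial_mul_factorial b a

lemma B_spec (n : ℕ) :
    B n * ((n / 2)! * ((n / 3)! * ((n / 7)! * ((n / 43)! * (r n)!)))) = n ! := by
  have h4 : Nat.choose (n / 43 + r n) (n / 43) * (n / 43)! * (r n)! = (n / 43 + r n)! :=
    acff _ _
  have h3 : Nat.choose (n / 7 + (n / 43 + r n)) (n / 7) * (n / 7)! * (n / 43 + r n)! =
      (n / 7 + (n / 43 + r n))! := acff _ _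
  have h2 : Nat.choose (n / 3 + (n / 7 + (n / 43 + r n))) (n / 3) * (n / 3)! *
      (n / 7 + (n / 43 + r n))! = (n / 3 + (n / 7 + (n / 43 + r n)))! :=
    acff _ _
  have h1 : Nat.choose (n / 2 + (n / 3 + (n / 7 + (n / 43 + r n)))) (n / 2) * (n / 2)! *
      (n / 3 + (n / 7 + (n / 43 + r n)))! = (n / 2 + (n / 3 + (n / 7 + (n / 43 + r n))))! :=
    acff _ _
  rw [parts_sum n] at h1
  unfold B
  rw [← h1, ← h2, ← h3, ← h4]
  ring

end Hanson

namespace Hanson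
open Finset

def L (n : ℕ) : ℕ := (Finset.Icc 1 n).lcm id

lemma L_ne_zero (n : ℕ) : L n ≠ 0 := by
  unfold L
  rw [Ne, Finset.lcm_eq_zero_iff]
  rintro ⟨x, hx, hx0⟩
  simp only [Finset.mem_coe, Finset.mem_Icc, id] at hx hx0
  omega

lemma add_div_le (a b q : ℕ) (hq : 0 < q) : a / q + b / q ≤ (a + b) / q := by
  rw [Nat.le_div_iff_mul_le hq, add_mul]
  exact Nat.add_le_add (Nat.div_mul_le_self a q) (Nat.div_mul_le_self b q)

/-- The key divisibility: `lcm(1..n) ∣ B n * lcm(1..r n)`. -/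
lemma L_dvd (n : ℕ) (hn : 1 ≤ n) : L n ∣ B n * L (r n) := by
  apply Finset.lcm_dvd
  intro m hm
  simp only [Finset.mem_Icc, id] at hm
  obtain ⟨hm1, hmn⟩ := hm
  have hm0 : m ≠ 0 := by omega
  have hB0 : B n ≠ 0 := (B_pos n).ne'
  have hL0 : L (r n) ≠ 0 := L_ne_zero _
  have hBL0 : B n * L (r n) ≠ 0 := mul_ne_zero hB0 hL0
  show m ∣ B n * L (r n)
  rw [← Nat.factorization_le_iff_dvd hm0 hBL0]
  intro p
  by_cases hp : p.Prime
  swap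
  · simp [Nat.factorization_eq_zero_of_not_prime _ hp]
  haveI : Fact p.Prime := ⟨hp⟩
  have hp1 : 1 < p := hp.one_lt
  set v := m.factorization p with hv
  -- p ^ v ≤ n
  have hpvm : p ^ v ≤ m := Nat.le_of_dvd (by omega) (Nat.ordProj_dvd m p)
  have hpvn : p ^ v ≤ n := le_trans hpvm hmn
  have hvlog : v ≤ Nat.log p n := (Nat.le_log_iff_pow_le hp1 (by omega)).mpr hpvn
  have hr1 : 1 ≤ r n := r_pos hn
  set u := min v (Nat.log p (r n)) with hu
  -- u ≤ factorization of L (r n)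
  have hLu : u ≤ (L (r n)).factorization p := by
    rw [← Nat.Prime.pow_dvd_iff_le_factorization hp hL0]
    apply Finset.dvd_lcm (f := id) (b := p ^ u)
    simp only [Finset.mem_Icc]
    constructor
    · exact Nat.one_le_pow _ _ (by omega)
    · calc p ^ u ≤ p ^ Nat.log p (r n) := Nat.pow_le_pow_right (by omega) (min_le_right _ _)
        _ ≤ r n := Nat.pow_log_le_self p (by omega)
  -- v - u ≤ factorization of B n
  have hBv : v - u ≤ (B n).factorization p := by
    set b := Nat.log p n + 1 with hb
    have hleg : ∀ k : ℕ, k ≤ n → (k !).factorization p = ∑ j ∈ Ico 1 b, k / p ^ j := by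
      intro k hk
      rw [Nat.factorization_def _ hp]
      exact padicValNat_factorial (lt_of_le_of_lt (Nat.log_mono_right hk) (by omega))
    have hspec := B_spec n
    have hfac : (B n).factorization p + (((n / 2)!).factorization p +
        (((n / 3)!).factorization p + (((n / 7)!).factorization p +
        (((n / 43)!).factorization p + ((r n)!).factorization p)))) =
        (n !).factorization p := by
      rw [← hspec]
      rw [Nat.factorization_mul hB0 (by positivity),
        Nat.factorization_mul (Nat.factorial_ne_zero _) (by positivity),
        Nat.factorization_mul (Nat.factorial_ne_zero _) (by positivity),
        Nat.factorization_mul (Nat.factorial_ne_zero _) (by positivity),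
        Nat.factorization_mul (Nat.factorial_ne_zero _) (Nat.factorial_ne_zero _)]
      simp [Finsupp.add_apply]
    have hrn : r n ≤ n := by unfold r; omega
    rw [hleg n le_rfl, hleg _ (by omega), hleg _ (by omega), hleg _ (by omega),
      hleg _ (by omega), hleg _ hrn] at hfac
    -- combine the five sums
    have hsum : (∑ j ∈ Ico 1 b, n / 2 / p ^ j) + ((∑ j ∈ Ico 1 b, n / 3 / p ^ j) +
        ((∑ j ∈ Ico 1 b, n / 7 / p ^ j) + ((∑ j ∈ Ico 1 b, n / 43 / p ^ j) +
        (∑ j ∈ Ico 1 b, r n / p ^ j)))) =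
        ∑ j ∈ Ico 1 b, (n / 2 / p ^ j + (n / 3 / p ^ j + (n / 7 / p ^ j +
          (n / 43 / p ^ j + r n / p ^ j)))) := by
      rw [← Finset.sum_add_distrib, ← Finset.sum_add_distrib, ← Finset.sum_add_distrib,
        ← Finset.sum_add_distrib]
    rw [hsum] at hfac
    -- the per-term bound
    have hub : Finset.Ioc u v ⊆ Ico 1 b := by
      intro j hj
      simp only [Finset.mem_Ioc, Finset.mem_Ico] at hj ⊢
      omega
    have hkey : (∑ j ∈ Ico 1 b, (n / 2 / p ^ j + (n / 3 / p ^ j + (n / 7 / p ^ j +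
          (n / 43 / p ^ j + r n / p ^ j))))) + (v - u) ≤ ∑ j ∈ Ico 1 b, n / p ^ j := by
      have hcard : v - u = ∑ j ∈ Ico 1 b, (if j ∈ Finset.Ioc u v then 1 else 0) := by
        rw [Finset.sum_ite_mem, Finset.inter_eq_right.mpr hub, Finset.sum_const,
          Nat.card_Ioc, smul_eq_mul, mul_one]
      rw [hcard, ← Finset.sum_add_distrib]
      apply Finset.sum_le_sum
      intro j hj
      simp only [Finset.mem_Ico] at hj
      have hq : 0 < p ^ j := Nat.pow_pos (by omega)
      by_cases hjm : j ∈ Finset.Ioc u v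
      · simp only [hjm, if_true]
        simp only [Finset.mem_Ioc] at hjm
        -- here p ^ j > r n and p ^ j ≤ n
        have huv : u = Nat.log p (r n) := by omega
        have hrq : r n < p ^ j := by
          calc r n < p ^ (Nat.log p (r n) + 1) := Nat.lt_pow_succ_log_self hp1 _
            _ ≤ p ^ j := Nat.pow_le_pow_right (by omega) (by omega)
        have hqn : p ^ j ≤ n := le_trans (Nat.pow_le_pow_right (by omega) hjm.2) hpvn
        have hr0 : r n / p ^ j = 0 := Nat.div_eq_of_lt hrq
        have hdd : ∀ d : ℕ, n / d / p ^ j = n / p ^ j / d := fun d => by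
          rw [Nat.div_div_eq_div_mul, Nat.div_div_eq_div_mul, mul_comm]
        rw [hr0, hdd 2, hdd 3, hdd 7, hdd 43]
        have hM : 1 ≤ n / p ^ j := (Nat.one_le_div_iff hq).mpr hqn
        omega
      · simp only [hjm, if_false]
        -- superadditivity
        calc n / 2 / p ^ j + (n / 3 / p ^ j + (n / 7 / p ^ j + (n / 43 / p ^ j + r n / p ^ j))) + 0
            ≤ (n / 2 + (n / 3 + (n / 7 + (n / 43 + r n)))) / p ^ j := by
              have h1 := add_div_le (n / 43) (r n) _ hq
              have h2 := add_div_le (n / 7) (n / 43 + r n) _ hq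
              have h3 := add_div_le (n / 3) (n / 7 + (n / 43 + r n)) _ hq
              have h4 := add_div_le (n / 2) (n / 3 + (n / 7 + (n / 43 + r n))) _ hq
              omega
          _ = n / p ^ j := by rw [parts_sum]
    omega
  -- combine
  have : (B n * L (r n)).factorization p = (B n).factorization p + (L (r n)).factorization p := by
    rw [Nat.factorization_mul hB0 hL0]; simp
  rw [this]
  omega

end Hanson

namespace Hanson
open Finset

lemma choose_bound (a b : ℕ) : (a + b).choose a * (a ^ a * b ^ b) ≤ (a + b) ^ (a + b) := by
  have h := add_pow (a : ℕ) b (a + b)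
  have hmem : a ∈ Finset.range (a + b + 1) := by simp [Nat.lt_succ_iff]
  have hterm := Finset.single_le_sum
    (f := fun k => a ^ k * b ^ (a + b - k) * (a + b).choose k)
    (fun i _ => Nat.zero_le _) hmem
  simp only [Nat.cast_id] at h hterm
  rw [← h] at hterm
  calc (a + b).choose a * (a ^ a * b ^ b) = a ^ a * b ^ (a + b - a) * (a + b).choose a := by
        rw [Nat.add_sub_cancel_left]; ring
    _ ≤ (a + b) ^ (a + b) := hterm

lemma B_le (n : ℕ) :
    B n * ((n / 2) ^ (n / 2) * ((n / 3) ^ (n / 3) * ((n / 7) ^ (n / 7) *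
      ((n / 43) ^ (n / 43) * (r n) ^ (r n))))) ≤ n ^ n := by
  have h4 := choose_bound (n / 43) (r n)
  have h3 := choose_bound (n / 7) (n / 43 + r n)
  have h2 := choose_bound (n / 3) (n / 7 + (n / 43 + r n))
  have h1 := choose_bound (n / 2) (n / 3 + (n / 7 + (n / 43 + r n)))
  rw [parts_sum] at h1
  unfold B
  calc Nat.choose n (n / 2) *
      (Nat.choose (n / 3 + (n / 7 + (n / 43 + r n))) (n / 3) *
        (Nat.choose (n / 7 + (n / 43 + r n)) (n / 7) *
          Nat.choose (n / 43 + r n) (n / 43))) *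
      ((n / 2) ^ (n / 2) * ((n / 3) ^ (n / 3) * ((n / 7) ^ (n / 7) *
        ((n / 43) ^ (n / 43) * (r n) ^ (r n))))) =
      Nat.choose n (n / 2) * ((n / 2) ^ (n / 2) *
        (Nat.choose (n / 3 + (n / 7 + (n / 43 + r n))) (n / 3) * ((n / 3) ^ (n / 3) *
          (Nat.choose (n / 7 + (n / 43 + r n)) (n / 7) * ((n / 7) ^ (n / 7) *
            (Nat.choose (n / 43 + r n) (n / 43) *
              ((n / 43) ^ (n / 43) * (r n) ^ (r n)))))))) := by ring
    _ ≤ Nat.choose n (n / 2) * ((n / 2) ^ (n / 2) *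
        (Nat.choose (n / 3 + (n / 7 + (n / 43 + r n))) (n / 3) * ((n / 3) ^ (n / 3) *
          (Nat.choose (n / 7 + (n / 43 + r n)) (n / 7) * ((n / 7) ^ (n / 7) *
            ((n / 43 + r n) ^ (n / 43 + r n))))))) := by
        gcongr
    _ ≤ Nat.choose n (n / 2) * ((n / 2) ^ (n / 2) *
        (Nat.choose (n / 3 + (n / 7 + (n / 43 + r n))) (n / 3) * ((n / 3) ^ (n / 3) *
          ((n / 7 + (n / 43 + r n)) ^ (n / 7 + (n / 43 + r n)))))) := by
        gcongr
    _ ≤ Nat.choose n (n / 2) * ((n / 2) ^ (n / 2) *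
        ((n / 3 + (n / 7 + (n / 43 + r n))) ^ (n / 3 + (n / 7 + (n / 43 + r n))))) := by
        gcongr
    _ ≤ n ^ n := h1
end Hanson

namespace Hanson
open Filter Topology Real

lemma eta_num : 0 < 1805 * Real.log (299/100) - (903 * Real.log 2 + 602 * Real.log 3
    + 258 * Real.log 7 + 42 * Real.log 43 + Real.log 1806) := by
  have hnat : (100:ℕ)^1805 * 2^903 * 3^602 * 7^258 * 43^42 * 1806 < 299^1805 := by decide +kernel
  have hr : ((100:ℝ))^1805 * 2^903 * 3^602 * 7^258 * 43^42 * 1806 < 299^1805 := by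
    exact_mod_cast hnat
  have hpos : (0:ℝ) < 100^1805 * 2^903 * 3^602 * 7^258 * 43^42 * 1806 := by positivity
  have hlog := Real.log_lt_log hpos hr
  rw [Real.log_mul (by positivity) (by positivity), Real.log_mul (by positivity) (by positivity),
    Real.log_mul (by positivity) (by positivity), Real.log_mul (by positivity) (by positivity),
    Real.log_mul (by positivity) (by positivity),
    Real.log_pow, Real.log_pow, Real.log_pow, Real.log_pow, Real.log_pow, Real.log_pow] at hlog
  have hdiv : Real.log (299/100) = Real.log 299 - Real.log 100 := by
    rw [Real.log_div (by norm_num) (by norm_num)]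
  have h1806 : Real.log 1806 = Real.log 2 + Real.log 3 + Real.log 7 + Real.log 43 := by
    rw [show (1806:ℝ) = 2*3*7*43 by norm_num, Real.log_mul (by norm_num) (by norm_num),
      Real.log_mul (by norm_num) (by norm_num), Real.log_mul (by norm_num) (by norm_num)]
  rw [hdiv, h1806]
  push_cast at hlog
  linarith

/-- The quotients `⌊n/d⌋/n` tend to `1/d`. -/
lemma tendsto_fd (d : ℕ) (hd : 0 < d) :
    Tendsto (fun n : ℕ => ((n / d : ℕ) : ℝ) / (n : ℝ)) atTop (𝓝 (1 / (d:ℝ))) := by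
  have hdR : (0:ℝ) < d := by exact_mod_cast hd
  apply tendsto_of_tendsto_of_tendsto_of_le_of_le'
    (g := fun n : ℕ => 1 / (d:ℝ) - 1 / (n:ℝ)) (h := fun _ : ℕ => 1 / (d:ℝ))
  · simpa using (tendsto_const_nhds (x := 1/(d:ℝ))).sub tendsto_one_div_atTop_nhds_zero_nat
  · exact tendsto_const_nhds
  · filter_upwards [eventually_ge_atTop 1] with n hn
    have hnR : (0:ℝ) < n := by exact_mod_cast hn
    have hql : (n:ℝ) / d - 1 ≤ ((n / d : ℕ) : ℝ) := by
      have h1 : n ≤ d * (n / d) + (d - 1) := by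
        have := Nat.div_add_mod n d
        have := Nat.mod_lt n hd
        omega
      have h2 : (n:ℝ) ≤ d * ((n / d : ℕ):ℝ) + ((d:ℝ) - 1) := by
        have : ((d * (n / d) + (d - 1) : ℕ) : ℝ) = d * ((n / d : ℕ):ℝ) + ((d:ℝ) - 1) := by
          push_cast [Nat.cast_sub hd]
          ring
        calc (n:ℝ) ≤ ((d * (n / d) + (d - 1) : ℕ) : ℝ) := by exact_mod_cast h1
          _ = _ := this
      rw [div_sub_one hdR.ne', div_le_iff₀ hdR]
      linarith [h2]
    calc 1 / (d:ℝ) - 1 / (n:ℝ) = ((n:ℝ) / d - 1) / n := by field_simp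
      _ ≤ ((n / d : ℕ) : ℝ) / n := by gcongr
  · filter_upwards [eventually_ge_atTop 1] with n hn
    have hnR : (0:ℝ) < n := by exact_mod_cast hn
    have := Nat.cast_div_le (m := n) (n := d) (α := ℝ)
    calc ((n / d : ℕ) : ℝ) / n ≤ ((n:ℝ) / d) / n := by gcongr
      _ = 1 / d := by field_simp

end Hanson

namespace Hanson
open Filter Topology Real

noncomputable def fr (n : ℕ) : ℝ := ((r n : ℕ) : ℝ) / n

noncomputable def fd (d n : ℕ) : ℝ := ((n / d : ℕ) : ℝ) / n

noncomputable def g (n : ℕ) : ℝ :=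
  (1 - fr n) * Real.log (299/100)
  + (fd 2 n * Real.log (fd 2 n) + fd 3 n * Real.log (fd 3 n)
    + fd 7 n * Real.log (fd 7 n) + fd 43 n * Real.log (fd 43 n)
    + fr n * Real.log (fr n))

lemma tendsto_fr :
    Tendsto fr atTop (𝓝 (1 - (1/2 + 1/3 + 1/7 + 1/43 : ℝ))) := by
  have h : ∀ᶠ n : ℕ in atTop, 1 - (fd 2 n + fd 3 n + fd 7 n + fd 43 n) = fr n := by
    filter_upwards [eventually_ge_atTop 1] with n hn
    have hnR : (0:ℝ) < n := by exact_mod_cast hn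
    have hs := sum_div_le n
    have hcast : ((r n : ℕ) : ℝ) = (n:ℝ) - (((n/2:ℕ):ℝ) + ((n/3:ℕ):ℝ) + ((n/7:ℕ):ℝ) + ((n/43:ℕ):ℝ)) := by
      unfold r
      push_cast [Nat.cast_sub hs]
      ring
    unfold fr fd
    rw [hcast]
    field_simp
  apply Tendsto.congr' h
  have := ((tendsto_fd 2 (by norm_num)).add (tendsto_fd 3 (by norm_num))).add
    ((tendsto_fd 7 (by norm_num)).add (tendsto_fd 43 (by norm_num)))
  have h2 := (tendsto_const_nhds (x := (1:ℝ)) (f := atTop (α := ℕ))).sub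
    (((tendsto_fd 2 (by norm_num)).add (tendsto_fd 3 (by norm_num))).add
      ((tendsto_fd 7 (by norm_num)).add (tendsto_fd 43 (by norm_num))))
  convert h2 using 2 with n
  · unfold fd; ring
  · norm_num

noncomputable def climit : ℝ :=
  (1 - (1 - (1/2 + 1/3 + 1/7 + 1/43 : ℝ))) * Real.log (299/100)
  + ((1/2 : ℝ) * Real.log (1/2) + (1/3 : ℝ) * Real.log (1/3)
    + (1/7 : ℝ) * Real.log (1/7) + (1/43 : ℝ) * Real.log (1/43)
    + (1 - (1/2 + 1/3 + 1/7 + 1/43 : ℝ)) * Real.log (1 - (1/2 + 1/3 + 1/7 + 1/43 : ℝ)))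

lemma climit_pos : 0 < climit := by
  have h6 : (1 - (1/2 + 1/3 + 1/7 + 1/43 : ℝ)) = 1/1806 := by norm_num
  unfold climit
  rw [h6]
  have e2 : Real.log (1/2 : ℝ) = - Real.log 2 := by rw [one_div, Real.log_inv]
  have e3 : Real.log (1/3 : ℝ) = - Real.log 3 := by rw [one_div, Real.log_inv]
  have e7 : Real.log (1/7 : ℝ) = - Real.log 7 := by rw [one_div, Real.log_inv]
  have e43 : Real.log (1/43 : ℝ) = - Real.log 43 := by rw [one_div, Real.log_inv]
  have e1806 : Real.log (1/1806 : ℝ) = - Real.log 1806 := by rw [one_div, Real.log_inv]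
  rw [e2, e3, e7, e43, e1806]
  have := eta_num
  nlinarith [this]

lemma tendsto_g : Tendsto g atTop (𝓝 climit) := by
  have hxl : ∀ (c : ℝ), Tendsto (fun x : ℝ => x * Real.log x) (𝓝 c) (𝓝 (c * Real.log c)) :=
    fun c => Real.continuous_mul_log.tendsto c
  have t2 := (hxl _).comp (tendsto_fd 2 (by norm_num))
  have t3 := (hxl _).comp (tendsto_fd 3 (by norm_num))
  have t7 := (hxl _).comp (tendsto_fd 7 (by norm_num))
  have t43 := (hxl _).comp (tendsto_fd 43 (by norm_num))
  have tr := (hxl _).comp tendsto_fr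
  have tfr1 := (tendsto_const_nhds (x := (1:ℝ)) (f := atTop (α := ℕ))).sub tendsto_fr
  unfold climit
  exact (tfr1.mul_const _).add ((((t2.add t3).add t7).add t43).add tr)

lemma pow_ineq_eventually : ∀ᶠ n : ℕ in atTop,
    (n:ℝ)^(n:ℕ) ≤ (299/100:ℝ)^(n - r n) *
      (((n/2:ℕ):ℝ)^(n/2:ℕ) * (((n/3:ℕ):ℝ)^(n/3:ℕ) * (((n/7:ℕ):ℝ)^(n/7:ℕ) *
        (((n/43:ℕ):ℝ)^(n/43:ℕ) * ((r n : ℕ):ℝ)^(r n))))) := by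
  filter_upwards [tendsto_g.eventually (eventually_gt_nhds climit_pos),
    eventually_ge_atTop 86] with n hg hn
  have hm2 : 1 ≤ n / 2 := by omega
  have hm3 : 1 ≤ n / 3 := by omega
  have hm7 : 1 ≤ n / 7 := by omega
  have hm43 : 1 ≤ n / 43 := by omega
  have hr1 : 1 ≤ r n := r_pos (by omega)
  have hN : (0:ℝ) < n := by exact_mod_cast (by omega : 0 < n)
  have ha2 : (0:ℝ) < ((n/2:ℕ):ℝ) := by exact_mod_cast hm2
  have ha3 : (0:ℝ) < ((n/3:ℕ):ℝ) := by exact_mod_cast hm3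
  have ha7 : (0:ℝ) < ((n/7:ℕ):ℝ) := by exact_mod_cast hm7
  have ha43 : (0:ℝ) < ((n/43:ℕ):ℝ) := by exact_mod_cast hm43
  have har : (0:ℝ) < ((r n:ℕ):ℝ) := by exact_mod_cast hr1
  have hrle : r n ≤ n := by unfold r; omega
  have hsum : ((n/2:ℕ):ℝ) + (((n/3:ℕ):ℝ) + (((n/7:ℕ):ℝ) + (((n/43:ℕ):ℝ) + ((r n:ℕ):ℝ)))) = (n:ℝ) := by
    exact_mod_cast congrArg (Nat.cast (R := ℝ)) (parts_sum n)
  have hcast : ((n - r n : ℕ):ℝ) = (n:ℝ) - ((r n:ℕ):ℝ) := by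
    rw [Nat.cast_sub hrle]
  have key : (n:ℝ) * g n = ((n:ℝ) - ((r n:ℕ):ℝ)) * Real.log (299/100)
      + (((n/2:ℕ):ℝ) * Real.log ((n/2:ℕ):ℝ) + ((n/3:ℕ):ℝ) * Real.log ((n/3:ℕ):ℝ)
        + ((n/7:ℕ):ℝ) * Real.log ((n/7:ℕ):ℝ) + ((n/43:ℕ):ℝ) * Real.log ((n/43:ℕ):ℝ)
        + ((r n:ℕ):ℝ) * Real.log ((r n:ℕ):ℝ))
      - (n:ℝ) * Real.log (n:ℝ) := by
    unfold g fr fd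
    rw [Real.log_div ha2.ne' hN.ne', Real.log_div ha3.ne' hN.ne', Real.log_div ha7.ne' hN.ne',
      Real.log_div ha43.ne' hN.ne', Real.log_div har.ne' hN.ne']
    field_simp
    linear_combination (-(Real.log (n:ℝ))) * hsum
  rw [← Real.log_le_log_iff (by positivity) (by positivity)]
  rw [Real.log_pow, Real.log_mul (by positivity) (by positivity),
    Real.log_mul (by positivity) (by positivity), Real.log_mul (by positivity) (by positivity),
    Real.log_mul (by positivity) (by positivity), Real.log_mul (by positivity) (by positivity),
    Real.log_pow, Real.log_pow, Real.log_pow, Real.log_pow, Real.log_pow, Real.log_pow, hcast]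
  have hnneg : (0:ℝ) ≤ (n:ℝ) * g n := le_of_lt (mul_pos hN hg)
  linarith [key]

end Hanson

namespace Hanson
open Filter Topology Real

lemma B_eventually : ∀ᶠ n : ℕ in atTop, (B n : ℝ) ≤ (299/100:ℝ)^(n - r n) := by
  filter_upwards [pow_ineq_eventually, eventually_ge_atTop 86] with n hpow hn
  have hm2 : 1 ≤ n / 2 := by omega
  have hr1 : 1 ≤ r n := r_pos (by omega)
  have hP : (0:ℝ) < ((n/2:ℕ):ℝ)^(n/2:ℕ) * (((n/3:ℕ):ℝ)^(n/3:ℕ) * (((n/7:ℕ):ℝ)^(n/7:ℕ) *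
      (((n/43:ℕ):ℝ)^(n/43:ℕ) * ((r n : ℕ):ℝ)^(r n)))) := by
    have h2 : (0:ℝ) < ((n/2:ℕ):ℝ) := by exact_mod_cast (by omega : 0 < n/2)
    have h3 : (0:ℝ) < ((n/3:ℕ):ℝ) := by exact_mod_cast (by omega : 0 < n/3)
    have h7 : (0:ℝ) < ((n/7:ℕ):ℝ) := by exact_mod_cast (by omega : 0 < n/7)
    have h43 : (0:ℝ) < ((n/43:ℕ):ℝ) := by exact_mod_cast (by omega : 0 < n/43)
    have hrr : (0:ℝ) < ((r n:ℕ):ℝ) := by exact_mod_cast hr1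
    positivity
  rw [← mul_le_mul_iff_of_pos_right hP]
  have hBle : (B n : ℝ) * (((n/2:ℕ):ℝ)^(n/2:ℕ) * (((n/3:ℕ):ℝ)^(n/3:ℕ) * (((n/7:ℕ):ℝ)^(n/7:ℕ) *
      (((n/43:ℕ):ℝ)^(n/43:ℕ) * ((r n : ℕ):ℝ)^(r n))))) ≤ (n:ℝ)^(n:ℕ) := by
    exact_mod_cast B_le n
  exact le_trans hBle hpow

lemma L_le_main : ∃ C : ℝ, 0 < C ∧ ∀ n : ℕ, (L n : ℝ) ≤ C * (299/100:ℝ)^n := by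
  obtain ⟨N₀, hN₀⟩ := eventually_atTop.mp B_eventually
  set M := max N₀ 2 with hM
  set C := (∑ j ∈ Finset.range M, (L j : ℝ)) + 1 with hC
  have hC1 : (1:ℝ) ≤ C := by
    have : (0:ℝ) ≤ ∑ j ∈ Finset.range M, (L j : ℝ) :=
      Finset.sum_nonneg fun j _ => by positivity
    linarith
  refine ⟨C, by linarith, ?_⟩
  intro n
  induction n using Nat.strong_induction_on with
  | _ n ih =>
    by_cases hn : n < M
    · have hmem : n ∈ Finset.range M := Finset.mem_range.mpr hn
      have h1 : (L n : ℝ) ≤ ∑ j ∈ Finset.range M, (L j : ℝ) :=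
        Finset.single_le_sum (f := fun j => (L j : ℝ)) (fun j _ => by positivity) hmem
      have h2 : (1:ℝ) ≤ (299/100:ℝ)^n := one_le_pow₀ (by norm_num)
      nlinarith
    · push_neg at hn
      have hn2 : 2 ≤ n := le_trans (le_max_right _ _) hn
      have hrlt : r n < n := by
        have : 1 ≤ n / 2 := by omega
        unfold r; omega
      have hdvd := L_dvd n (by omega)
      have hLpos : 0 < B n * L (r n) :=
        Nat.pos_of_ne_zero (mul_ne_zero (B_pos n).ne' (L_ne_zero _))
      have hLle : L n ≤ B n * L (r n) := Nat.le_of_dvd hLpos hdvd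
      have hB := hN₀ n (le_trans (le_max_left _ _) hn)
      have hih := ih (r n) hrlt
      have hrle : r n ≤ n := le_of_lt hrlt
      calc (L n : ℝ) ≤ (B n : ℝ) * (L (r n) : ℝ) := by exact_mod_cast hLle
        _ ≤ (299/100:ℝ)^(n - r n) * (C * (299/100:ℝ)^(r n)) := by
            apply mul_le_mul hB hih (by positivity) (by positivity)
        _ = C * ((299/100:ℝ)^(n - r n) * (299/100:ℝ)^(r n)) := by ring
        _ = C * (299/100:ℝ)^n := by rw [← pow_add, Nat.sub_add_cancel hrle]

end Hanson

theorem lcm_le_three_pow_eventually :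
    ∃ N : ℕ, ∀ n ≥ N, (Finset.Icc 1 n).lcm id ≤ 3 ^ n := by
  obtain ⟨C, hC0, hC⟩ := Hanson.L_le_main
  have hgt : Filter.Tendsto (fun n : ℕ => (300/299:ℝ)^n) Filter.atTop Filter.atTop :=
    tendsto_pow_atTop_atTop_of_one_lt (by norm_num)
  obtain ⟨N, hN⟩ := Filter.eventually_atTop.mp (hgt.eventually_ge_atTop C)
  refine ⟨N, fun n hn => ?_⟩
  have h1 := hC n
  have h2 := hN n hn
  have h3 : (Hanson.L n : ℝ) ≤ (3:ℝ)^n := by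
    calc (Hanson.L n : ℝ) ≤ C * (299/100:ℝ)^n := h1
      _ ≤ (300/299:ℝ)^n * (299/100:ℝ)^n := by
          apply mul_le_mul_of_nonneg_right h2 (by positivity)
      _ = (3:ℝ)^n := by rw [← mul_pow]; norm_num
  have : Hanson.L n ≤ 3^n := by exact_mod_cast h3
  exact this
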